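/- Let 𝒱 be any subset of {V_{a,b} : n ∈ ℕ, a, b ∈ ℝⁿ} and let A be the closed star-subalgebra of B(H) generated by 𝒰 ∪ 𝒱. Then every nonzero closed two-sided ideal of A contains the projection P_α for some m ∈ ℕ and α ∈ ℝᵐ. -/

import Mathlib

open scoped Classical

noncomputable section

/-- The set of real sequences. -/
abbrev X : Type := ℕ → ℝ

/-- The Hilbert space `ℓ²(X)`. -/
abbrev H : Type := lp (fun _ : X => ℂ) 2

/-- `Xa a` is the set of sequences extending the `n`-tuple `a`. -/
def Xa {n : ℕ} (a : Fin n → ℝ) : Set X := {x | ∀ i : Fin n, x i = a i}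

/-- Replace the initial segment of `x` by the tuple `a` (this is `f_{a,b}` for any `b`). -/
def repl {n : ℕ} (a : Fin n → ℝ) (x : X) : X := fun i => if h : i < n then a ⟨i, h⟩ else x i

/-- `P` is the family of orthogonal projections `P_a` onto `ℓ²(X_a)`. -/
def IsProjFamily (P : ∀ n : ℕ, (Fin n → ℝ) → (H →L[ℂ] H)) : Prop :=
  ∀ (n : ℕ) (a : Fin n → ℝ) (ξ : H) (x : X),
    P n a ξ x = if x ∈ Xa a then ξ x else 0

/-- `V` is the family of partial isometries `V_{a,b}`. -/
def IsVFamily (V : ∀ n : ℕ, (Fin n → ℝ) → (Fin n → ℝ) → (H →L[ℂ] H)) : Prop :=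
  ∀ (n : ℕ) (a b : Fin n → ℝ) (ξ : H) (x : X),
    V n a b ξ x = if x ∈ Xa b then ξ (repl a x) else 0

open scoped InnerProductSpace

namespace Stmt8

/-- basis vector -/
def chi (x : X) : H := lp.single 2 x 1

lemma chi_apply (x z : X) : chi x z = if z = x then (1:ℂ) else 0 := by
  rw [chi, lp.single_apply]
  split_ifs with h
  · subst h; exact Pi.single_eq_same _ _
  · exact Pi.single_eq_of_ne h _

lemma op_ext {S T : H →L[ℂ] H} (h : ∀ (ξ : H) (z : X), S ξ z = T ξ z) : S = T :=
  ContinuousLinearMap.ext fun ξ => lp.ext (funext fun z => h ξ z)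

def Pat (F : Finset ℕ) (p : ℕ → ℝ) (z : X) : Prop := ∀ i ∈ F, z i = p i

def IsMono (S : H →L[ℂ] H) : Prop :=
  ∃ (m : ℕ) (c : Fin m → ℝ) (F : Finset ℕ) (p : ℕ → ℝ),
    (∀ i, i < m → i ∈ F) ∧ ∀ (ξ : H) (z : X), S ξ z = if Pat F p z then ξ (repl c z) else 0

def MSet : Set (H →L[ℂ] H) := {S | S = 0 ∨ IsMono S}

lemma repl_apply {m : ℕ} (c : Fin m → ℝ) (z : X) (i : ℕ) :
    repl c z i = if h : i < m then c ⟨i, h⟩ else z i := rfl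

lemma repl_zero (c : Fin 0 → ℝ) (z : X) : repl c z = z := by
  funext i; simp [repl]

lemma repl_eq_self_iff {m : ℕ} (c : Fin m → ℝ) (z : X) :
    repl c z = z ↔ ∀ i (h : i < m), z i = c ⟨i, h⟩ := by
  constructor
  · intro h i hi
    have := congrFun h i
    rw [repl_apply, dif_pos hi] at this
    exact this.symm
  · intro h; funext i
    rw [repl_apply]
    split_ifs with hi
    · exact (h i hi).symm
    · rfl

/-- gluing of prefixes for composition -/
def glue {m' m : ℕ} (c' : Fin m' → ℝ) (c : Fin m → ℝ) : Fin (max m' m) → ℝ :=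
  fun i => if h : (i : ℕ) < m' then c' ⟨i, h⟩ else c ⟨i, (lt_max_iff.mp i.2).resolve_left h⟩

lemma repl_repl {m' m : ℕ} (c' : Fin m' → ℝ) (c : Fin m → ℝ) (z : X) :
    repl c' (repl c z) = repl (glue c' c) z := by
  funext i
  simp only [repl_apply, glue]
  rcases lt_or_ge i m' with h1 | h1
  · rw [dif_pos h1, dif_pos (lt_max_iff.mpr (Or.inl h1)), dif_pos h1]
  · rw [dif_neg (not_lt.mpr h1)]
    rcases lt_or_ge i m with h2 | h2
    · rw [dif_pos h2, dif_pos (lt_max_iff.mpr (Or.inr h2)), dif_neg (not_lt.mpr h1)]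
    · rw [dif_neg (not_lt.mpr h2), dif_neg (by rw [not_lt, max_le_iff]; exact ⟨h1, h2⟩)]

lemma isMono_mul {S S' : H →L[ℂ] H} (hS : IsMono S) (hS' : IsMono S') : (S * S') ∈ MSet := by
  obtain ⟨m, c, F, p, hcov, hform⟩ := hS
  obtain ⟨m', c', F', p', hcov', hform'⟩ := hS'
  have hcomp : ∀ (ξ : H) (z : X), (S * S') ξ z =
      if Pat F p z then (if Pat F' p' (repl c z) then ξ (repl c' (repl c z)) else 0) else 0 := by
    intro ξ z
    rw [ContinuousLinearMap.mul_apply, hform (S' ξ) z, hform' ξ (repl c z)]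
  by_cases hκ : ∀ i ∈ F', ∀ h : i < m, c ⟨i, h⟩ = p' i
  · -- constant part of second pattern satisfied
    have hpat' : ∀ z : X, Pat F' p' (repl c z) ↔ Pat (F'.filter (fun i => m ≤ i)) p' z := by
      intro z
      constructor
      · intro h i hi
        rw [Finset.mem_filter] at hi
        have := h i hi.1
        rwa [repl_apply, dif_neg (not_lt.mpr hi.2)] at this
      · intro h i hi
        rw [repl_apply]
        split_ifs with him
        · exact hκ i hi him
        · exact h i (Finset.mem_filter.mpr ⟨hi, not_lt.mp him⟩)
    set G := F'.filter (fun i => m ≤ i) with hG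
    by_cases hκ2 : ∀ i ∈ F, i ∈ G → p i = p' i
    · -- genuine monomial
      right
      refine ⟨max m' m, glue c' c, F ∪ G, fun i => if i ∈ F then p i else p' i, ?_, ?_⟩
      · intro i hi
        rcases lt_or_ge i m with h2 | h2
        · exact Finset.mem_union_left _ (hcov i h2)
        · have him' : i < m' := by
            rcases lt_max_iff.mp hi with h | h
            · exact h
            · omega
          exact Finset.mem_union_right _
            (Finset.mem_filter.mpr ⟨hcov' i him', h2⟩)
      · intro ξ z
        rw [hcomp ξ z]
        have hiff : (Pat F p z ∧ Pat G p' z) ↔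
            Pat (F ∪ G) (fun i => if i ∈ F then p i else p' i) z := by
          constructor
          · rintro ⟨h1, h2⟩ i hi
            by_cases hiF : i ∈ F
            · simpa [hiF] using h1 i hiF
            · have hiG : i ∈ G := (Finset.mem_union.mp hi).resolve_left hiF
              simpa [hiF] using h2 i hiG
          · intro h
            constructor
            · intro i hi
              simpa [hi] using h i (Finset.mem_union_left _ hi)
            · intro i hi
              by_cases hiF : i ∈ F
              · rw [← hκ2 i hiF hi]
                simpa [hiF] using h i (Finset.mem_union_left _ hiF)
              · simpa [hiF] using h i (Finset.mem_union_right _ hi)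
        rw [repl_repl]
        by_cases h1 : Pat F p z
        · rw [if_pos h1]
          by_cases h2 : Pat G p' z
          · rw [if_pos ((hpat' z).mpr h2), if_pos (hiff.mp ⟨h1, h2⟩)]
          · rw [if_neg (fun hc => h2 ((hpat' z).mp hc)),
              if_neg (fun hc => h2 (hiff.mpr hc).2)]
        · rw [if_neg h1, if_neg (fun hc => h1 (hiff.mpr hc).1)]
    · -- conflicting patterns: zero
      left
      push_neg at hκ2
      obtain ⟨i₀, hi₀F, hi₀G, hne⟩ := hκ2
      apply op_ext; intro ξ z
      rw [hcomp ξ z]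
      have : ¬ (Pat F p z ∧ Pat F' p' (repl c z)) := by
        rintro ⟨h1, h2⟩
        have e1 := h1 i₀ hi₀F
        have e2 := (hpat' z).mp h2 i₀ hi₀G
        exact hne (e1.symm.trans e2)
      simp only [ContinuousLinearMap.zero_apply]
      split_ifs with h1 h2
      · exact absurd ⟨h1, h2⟩ this
      all_goals rfl
  · -- constant mismatch: zero
    left
    push_neg at hκ
    obtain ⟨i₀, hi₀, h₀, hne⟩ := hκ
    apply op_ext; intro ξ z
    rw [hcomp ξ z]
    have : ∀ z : X, ¬ Pat F' p' (repl c z) := by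
      intro z hc
      have := hc i₀ hi₀
      rw [repl_apply, dif_pos h₀] at this
      exact hne this
    simp only [ContinuousLinearMap.zero_apply]
    split_ifs with h1 h2
    · exact absurd h2 (this z)
    all_goals rfl

lemma apply_eq_inner_chi (η : H) (x : X) : η x = ⟪chi x, η⟫_ℂ := by
  rw [chi, lp.inner_single_left]; simp

lemma star_apply_eq (S : H →L[ℂ] H) (ξ : H) (x : X) : (star S) ξ x = ⟪S (chi x), ξ⟫_ℂ := by
  rw [apply_eq_inner_chi ((star S) ξ) x, ContinuousLinearMap.star_eq_adjoint,
    ← inner_conj_symm, ContinuousLinearMap.adjoint_inner_left, inner_conj_symm]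

def starPat (m : ℕ) (c : Fin m → ℝ) (F : Finset ℕ) (p : ℕ → ℝ) (x : X) : Prop :=
  (∀ i (h : i < m), x i = c ⟨i, h⟩) ∧ (∀ i ∈ F, m ≤ i → x i = p i)

def starPt (m : ℕ) (p : ℕ → ℝ) (x : X) : X := fun i => if i < m then p i else x i

lemma mono_apply_chi {S : H →L[ℂ] H} {m : ℕ} {c : Fin m → ℝ} {F : Finset ℕ} {p : ℕ → ℝ}
    (hcov : ∀ i, i < m → i ∈ F)
    (hform : ∀ (ξ : H) (z : X), S ξ z = if Pat F p z then ξ (repl c z) else 0) (x : X) :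
    S (chi x) = if starPat m c F p x then chi (starPt m p x) else 0 := by
  apply lp.ext; funext w
  rw [hform (chi x) w, chi_apply]
  have key : (Pat F p w ∧ repl c w = x) ↔ (starPat m c F p x ∧ w = starPt m p x) := by
    constructor
    · rintro ⟨hw, hr⟩
      have h1 : ∀ i (h : i < m), x i = c ⟨i, h⟩ := by
        intro i hi
        have := congrFun hr i
        rw [repl_apply, dif_pos hi] at this
        exact this.symm
      have h2 : ∀ i ∈ F, m ≤ i → x i = p i := by
        intro i hi hmi
        have := congrFun hr i
        rw [repl_apply, dif_neg (not_lt.mpr hmi)] at this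
        rw [← this]; exact hw i hi
      refine ⟨⟨h1, h2⟩, ?_⟩
      funext i
      show w i = if i < m then p i else x i
      split_ifs with hi
      · exact hw i (hcov i hi)
      · have := congrFun hr i
        rw [repl_apply, dif_neg hi] at this
        exact this
    · rintro ⟨⟨h1, h2⟩, hw⟩
      constructor
      · intro i hi
        have : w i = if i < m then p i else x i := congrFun hw i
        rw [this]
        split_ifs with him
        · rfl
        · exact h2 i hi (not_lt.mp him)
      · funext i
        rw [repl_apply]
        split_ifs with hi
        · exact (h1 i hi).symm
        · have : w i = if i < m then p i else x i := congrFun hw i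
          rw [this, if_neg hi]
  have hrhs : ((if starPat m c F p x then chi (starPt m p x) else (0:H)) : H) w
      = if (starPat m c F p x ∧ w = starPt m p x) then (1:ℂ) else 0 := by
    by_cases h1 : starPat m c F p x
    · rw [if_pos h1, chi_apply]
      by_cases h2 : w = starPt m p x
      · rw [if_pos h2, if_pos ⟨h1, h2⟩]
      · rw [if_neg h2, if_neg (fun hc => h2 hc.2)]
    · rw [if_neg h1, if_neg (fun hc => h1 hc.1)]
      rfl
  rw [hrhs]
  by_cases hw : Pat F p w
  · rw [if_pos hw]
    by_cases hr : repl c w = x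
    · rw [if_pos hr, if_pos (key.mp ⟨hw, hr⟩)]
    · rw [if_neg hr, if_neg (fun hc => hr (key.mpr hc).2)]
  · rw [if_neg hw, if_neg (fun hc => hw (key.mpr hc).1)]

lemma star_mono_form {S : H →L[ℂ] H} {m : ℕ} {c : Fin m → ℝ} {F : Finset ℕ} {p : ℕ → ℝ}
    (hcov : ∀ i, i < m → i ∈ F)
    (hform : ∀ (ξ : H) (z : X), S ξ z = if Pat F p z then ξ (repl c z) else 0) :
    ∀ (ξ : H) (x : X), (star S) ξ x = if starPat m c F p x then ξ (starPt m p x) else 0 := by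
  intro ξ x
  rw [star_apply_eq, mono_apply_chi hcov hform x]
  by_cases h : starPat m c F p x
  · rw [if_pos h, if_pos h, chi, lp.inner_single_left]
    simp
  · rw [if_neg h, if_neg h, inner_zero_left]

lemma isMono_star {S : H →L[ℂ] H} (hS : IsMono S) : IsMono (star S) := by
  obtain ⟨m, c, F, p, hcov, hform⟩ := hS
  refine ⟨m, fun i => p i, F, fun i => if h : i < m then c ⟨i, h⟩ else p i, hcov, ?_⟩
  intro ξ x
  rw [star_mono_form hcov hform ξ x]
  have h1 : Pat F (fun i => if h : i < m then c ⟨i, h⟩ else p i) x ↔ starPat m c F p x := by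
    constructor
    · intro h
      constructor
      · intro i hi
        have := h i (hcov i hi)
        simpa [dif_pos hi] using this
      · intro i hi hmi
        have := h i hi
        simpa [dif_neg (not_lt.mpr hmi)] using this
    · rintro ⟨h1, h2⟩ i hi
      show x i = if h : i < m then c ⟨i, h⟩ else p i
      split_ifs with him
      · exact h1 i him
      · exact h2 i hi (not_lt.mp him)
  have h2 : repl (fun i : Fin m => p i) x = starPt m p x := by
    funext i
    rw [repl_apply]
    show _ = if i < m then p i else x i
    split_ifs with hi
    · rfl
    · rfl
  rw [h2]
  by_cases h : starPat m c F p x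
  · rw [if_pos h, if_pos (h1.mpr h)]
  · rw [if_neg h, if_neg (fun hc => h (h1.mp hc))]
-- the span submodule
def BMod : Submodule ℂ (H →L[ℂ] H) := Submodule.span ℂ MSet

lemma mem_MSet_mul {S S' : H →L[ℂ] H} (hS : S ∈ MSet) (hS' : S' ∈ MSet) : S * S' ∈ MSet := by
  rcases hS with h | h
  · left; rw [h, zero_mul]
  rcases hS' with h' | h'
  · left; rw [h', mul_zero]
  exact isMono_mul h h'

lemma BMod_mul_mem : ∀ x y : H →L[ℂ] H, x ∈ BMod → y ∈ BMod → x * y ∈ BMod := by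
  intro x y hx hy
  induction hx using Submodule.span_induction with
  | mem x hxm =>
    induction hy using Submodule.span_induction with
    | mem y hym => exact Submodule.subset_span (mem_MSet_mul hxm hym)
    | zero => rw [mul_zero]; exact BMod.zero_mem
    | add a b _ _ ha hb => rw [mul_add]; exact BMod.add_mem ha hb
    | smul r a _ ha => rw [mul_smul_comm]; exact BMod.smul_mem r ha
  | zero => rw [zero_mul]; exact BMod.zero_mem
  | add a b _ _ ha hb => rw [add_mul]; exact BMod.add_mem ha hb
  | smul r a _ ha => rw [smul_mul_assoc]; exact BMod.smul_mem r ha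

def BAlg : NonUnitalStarSubalgebra ℂ (H →L[ℂ] H) :=
  { BMod.toNonUnitalSubalgebra BMod_mul_mem with
    star_mem' := by
      intro x hx
      induction hx using Submodule.span_induction with
      | mem x hxm =>
        refine Submodule.subset_span ?_
        rcases hxm with h | h
        · left; rw [h, star_zero]
        · right; exact isMono_star h
      | zero => rw [star_zero]; exact BMod.zero_mem
      | add a b _ _ ha hb => rw [star_add]; exact BMod.add_mem ha hb
      | smul r a _ ha => rw [star_smul]; exact BMod.smul_mem _ ha }

lemma BAlg_coe : (BAlg : Set (H →L[ℂ] H)) = (BMod : Set (H →L[ℂ] H)) := rfl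

-- compression
def projForm (N : ℕ) (x : X) (Q : H →L[ℂ] H) : Prop :=
  ∀ (ξ : H) (z : X), Q ξ z = if (∀ i, i < N → z i = x i) then ξ z else 0

lemma smul_op_apply (d : ℂ) (Q : H →L[ℂ] H) (ξ : H) (z : X) :
    (d • Q) ξ z = d * (Q ξ z) := by
  rw [ContinuousLinearMap.smul_apply, lp.coeFn_smul, Pi.smul_apply, smul_eq_mul]

lemma compress_mono {S : H →L[ℂ] H} (hS : IsMono S) (x : X) :
    ∃ N₀ : ℕ, ∀ N, N₀ ≤ N → ∀ Q : H →L[ℂ] H, projForm N x Q →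
      Q * S * Q = (S (chi x) x) • Q := by
  obtain ⟨m, c, F, p, hcov, hform⟩ := hS
  refine ⟨max m ((F.sup id) + 1), ?_⟩
  intro N hN Q hQ
  have hmN : m ≤ N := le_trans (le_max_left _ _) hN
  have hFN : ∀ i ∈ F, i < N := by
    intro i hi
    have : i + 1 ≤ (F.sup id) + 1 := Nat.succ_le_succ (Finset.le_sup (f := id) hi)
    omega
  -- the diagonal value
  have hdiag : S (chi x) x =
      if (Pat F p x ∧ ∀ i (h : i < m), x i = c ⟨i, h⟩) then (1:ℂ) else 0 := by
    rw [hform (chi x) x, chi_apply]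
    by_cases h1 : Pat F p x
    · rw [if_pos h1]
      by_cases h2 : ∀ i (h : i < m), x i = c ⟨i, h⟩
      · rw [if_pos ((repl_eq_self_iff c x).mpr h2), if_pos ⟨h1, h2⟩]
      · rw [if_neg (fun hc => h2 ((repl_eq_self_iff c x).mp hc)),
          if_neg (fun hc => h2 hc.2)]
    · rw [if_neg h1, if_neg (fun hc => h1 hc.1)]
  apply op_ext
  intro ξ z
  rw [ContinuousLinearMap.mul_apply, ContinuousLinearMap.mul_apply,
    hQ (S (Q ξ)) z, smul_op_apply, hQ ξ z, hdiag]
  by_cases hz : ∀ i, i < N → z i = x i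
  · rw [if_pos hz, hform (Q ξ) z, hQ ξ (repl c z)]
    have hPatiff : Pat F p z ↔ Pat F p x := by
      constructor <;> intro h i hi
      · rw [← hz i (hFN i hi)]; exact h i hi
      · rw [hz i (hFN i hi)]; exact h i hi
    by_cases h1 : Pat F p x
    · have hz1 : Pat F p z := hPatiff.mpr h1
      rw [if_pos hz1]
      by_cases h2 : ∀ i (h : i < m), x i = c ⟨i, h⟩
      · have hcyl : ∀ i, i < N → repl c z i = x i := by
          intro i hiN
          rw [repl_apply]
          split_ifs with him
          · exact (h2 i him).symm
          · exact hz i hiN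
        have hreplz : repl c z = z := by
          funext i
          rw [repl_apply]
          split_ifs with him
          · rw [hz i (lt_of_lt_of_le him hmN)]
            exact (h2 i him).symm
          · rfl
        rw [if_pos hcyl, hreplz, if_pos hz, if_pos ⟨h1, h2⟩, one_mul]
      · have : ¬ ∀ i, i < N → repl c z i = x i := by
          intro hc
          apply h2
          intro i him
          have := hc i (lt_of_lt_of_le him hmN)
          rw [repl_apply, dif_pos him] at this
          exact this.symm
        rw [if_neg this, if_neg (fun hc => h2 hc.2), zero_mul]
    · rw [if_neg (fun hc => h1 (hPatiff.mp hc)), if_neg (fun hc => h1 hc.1), zero_mul]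
  · rw [if_neg hz, if_neg hz, mul_zero]

-- generators
lemma isMono_P {P : ∀ n : ℕ, (Fin n → ℝ) → (H →L[ℂ] H)} (hP : IsProjFamily P)
    (n : ℕ) (a : Fin n → ℝ) : IsMono (P n a) := by
  refine ⟨0, fun i => i.elim0, Finset.range n,
    fun i => if h : i < n then a ⟨i, h⟩ else 0, by omega, ?_⟩
  intro ξ z
  rw [hP n a ξ z]
  have hrepl : repl (fun i : Fin 0 => i.elim0) z = z := by
    funext i; rw [repl_apply]; simp
  rw [hrepl]
  have hiff : z ∈ Xa a ↔ Pat (Finset.range n) (fun i => if h : i < n then a ⟨i, h⟩ else 0) z := by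
    constructor
    · intro h i hi
      rw [Finset.mem_range] at hi
      show z i = if h : i < n then a ⟨i, h⟩ else 0
      rw [dif_pos hi]
      exact h ⟨i, hi⟩
    · intro h i
      have := h i (Finset.mem_range.mpr i.2)
      simpa [dif_pos i.2] using this
  by_cases h : z ∈ Xa a
  · rw [if_pos h, if_pos (hiff.mp h)]
  · rw [if_neg h, if_neg (fun hc => h (hiff.mpr hc))]

lemma isMono_V {V : ∀ n : ℕ, (Fin n → ℝ) → (Fin n → ℝ) → (H →L[ℂ] H)} (hV : IsVFamily V)
    (n : ℕ) (a b : Fin n → ℝ) : IsMono (V n a b) := by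
  refine ⟨n, a, Finset.range n,
    fun i => if h : i < n then b ⟨i, h⟩ else 0, fun i hi => Finset.mem_range.mpr hi, ?_⟩
  intro ξ z
  rw [hV n a b ξ z]
  have hiff : z ∈ Xa b ↔ Pat (Finset.range n) (fun i => if h : i < n then b ⟨i, h⟩ else 0) z := by
    constructor
    · intro h i hi
      rw [Finset.mem_range] at hi
      show z i = if h : i < n then b ⟨i, h⟩ else 0
      rw [dif_pos hi]
      exact h ⟨i, hi⟩
    · intro h i
      have := h i (Finset.mem_range.mpr i.2)
      simpa [dif_pos i.2] using this
  by_cases h : z ∈ Xa b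
  · rw [if_pos h, if_pos (hiff.mp h)]
  · rw [if_neg h, if_neg (fun hc => h (hiff.mpr hc))]

lemma compress_span {S : H →L[ℂ] H} (hS : S ∈ BMod) (x : X) :
    ∃ N₀ : ℕ, ∀ N, N₀ ≤ N → ∀ Q : H →L[ℂ] H, projForm N x Q →
      Q * S * Q = (S (chi x) x) • Q := by
  induction hS using Submodule.span_induction with
  | mem S hSm =>
    rcases hSm with h | h
    · subst h
      exact ⟨0, fun N _ Q _ => by
        simp only [mul_zero, zero_mul, ContinuousLinearMap.zero_apply]
        rw [show ((0:H) x) = (0:ℂ) from rfl, zero_smul]⟩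
    · exact compress_mono h x
  | zero =>
    exact ⟨0, fun N _ Q _ => by
      simp only [mul_zero, zero_mul, ContinuousLinearMap.zero_apply]
      rw [show ((0:H) x) = (0:ℂ) from rfl, zero_smul]⟩
  | add S S' _ _ hS hS' =>
    obtain ⟨N₁, h₁⟩ := hS
    obtain ⟨N₂, h₂⟩ := hS'
    refine ⟨max N₁ N₂, fun N hN Q hQ => ?_⟩
    rw [mul_add, add_mul, h₁ N (le_trans (le_max_left _ _) hN) Q hQ,
      h₂ N (le_trans (le_max_right _ _) hN) Q hQ]
    rw [ContinuousLinearMap.add_apply, lp.coeFn_add, Pi.add_apply, add_smul]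
  | smul r S _ hS =>
    obtain ⟨N₁, h₁⟩ := hS
    refine ⟨N₁, fun N hN Q hQ => ?_⟩
    rw [mul_smul_comm, smul_mul_assoc, h₁ N hN Q hQ,
      ContinuousLinearMap.smul_apply, lp.coeFn_smul, Pi.smul_apply, smul_smul, smul_eq_mul]
set_option maxHeartbeats 4000000 in
lemma mem_of_approx {𝔄 : NonUnitalStarSubalgebra ℂ (H →L[ℂ] H)} (I : TwoSidedIdeal 𝔄)
    (hI : IsClosed (I : Set 𝔄)) (qe R' u : 𝔄) (hR' : R' ∈ I)
    (huq : u * qe = qe - R') (hu : ‖(u : H →L[ℂ] H)‖ < 1) : qe ∈ I := by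
  obtain ⟨e, he0, heS⟩ : ∃ e : ℕ → 𝔄, e 0 = qe ∧ ∀ n, e (n+1) = u * e n :=
    ⟨fun n => n.rec qe (fun _ en => u * en), rfl, fun n => rfl⟩
  have hI_e : ∀ n, qe - e n ∈ I := by
    intro n
    induction n with
    | zero => rw [he0, sub_self]; exact I.zero_mem
    | succ n ih =>
      have hms : u * (qe - e n) = u * qe - u * e n := mul_sub u qe (e n)
      have h1 : qe - e (n+1) = R' + u * (qe - e n) := by
        rw [heS n, hms, huq]
        abel
      rw [h1]
      exact I.add_mem hR' (I.mul_mem_left _ _ ih)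
  have hnorm_e : ∀ n, ‖((e n : 𝔄) : H →L[ℂ] H)‖ ≤ ‖(u : H →L[ℂ] H)‖^n * ‖(qe : H →L[ℂ] H)‖ := by
    intro n
    induction n with
    | zero => rw [he0, pow_zero, one_mul]
    | succ n ih =>
      rw [heS n]
      calc ‖((u * e n : 𝔄) : H →L[ℂ] H)‖ = ‖(u : H →L[ℂ] H) * ((e n : 𝔄) : H →L[ℂ] H)‖ := by
            rw [MulMemClass.coe_mul]
        _ ≤ ‖(u : H →L[ℂ] H)‖ * ‖((e n : 𝔄) : H →L[ℂ] H)‖ := norm_mul_le _ _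
        _ ≤ ‖(u : H →L[ℂ] H)‖ * (‖(u : H →L[ℂ] H)‖^n * ‖(qe : H →L[ℂ] H)‖) :=
            mul_le_mul_of_nonneg_left ih (norm_nonneg _)
        _ = ‖(u : H →L[ℂ] H)‖^(n+1) * ‖(qe : H →L[ℂ] H)‖ := by ring
  have htend0 : Filter.Tendsto (fun n => ((e n : 𝔄) : H →L[ℂ] H)) Filter.atTop (nhds 0) := by
    rw [tendsto_zero_iff_norm_tendsto_zero]
    apply squeeze_zero (fun n => norm_nonneg _) hnorm_e
    have h1 : Filter.Tendsto (fun n => ‖(u : H →L[ℂ] H)‖^n) Filter.atTop (nhds 0) :=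
      tendsto_pow_atTop_nhds_zero_of_lt_one (norm_nonneg _) hu
    have h2 := h1.mul_const ‖(qe : H →L[ℂ] H)‖
    rw [zero_mul] at h2
    exact h2
  have htend : Filter.Tendsto (fun n => qe - e n) Filter.atTop (nhds qe) := by
    rw [Topology.IsEmbedding.subtypeVal.tendsto_nhds_iff]
    have h1 : Filter.Tendsto (fun n => (qe : H →L[ℂ] H) - ((e n : 𝔄) : H →L[ℂ] H))
        Filter.atTop (nhds ((qe : H →L[ℂ] H) - 0)) := tendsto_const_nhds.sub htend0
    rw [sub_zero] at h1
    exact h1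
  exact hI.mem_of_tendsto htend (Filter.Eventually.of_forall hI_e)

end Stmt8

open Stmt8

set_option maxHeartbeats 2000000 in
set_option synthInstance.maxHeartbeats 400000 in
/-- for any `𝒱 ⊆ {V_{a,b}}`, every nonzero closed two-sided ideal of the closed
star-subalgebra `A` generated by `𝒰 ∪ 𝒱` contains some projection `P_α`. -/
theorem stmt8 (P : ∀ n : ℕ, (Fin n → ℝ) → (H →L[ℂ] H)) (hP : IsProjFamily P)
    (V : ∀ n : ℕ, (Fin n → ℝ) → (Fin n → ℝ) → (H →L[ℂ] H)) (hV : IsVFamily V)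
    (𝒱 : Set (H →L[ℂ] H)) (h𝒱 : 𝒱 ⊆ {W | ∃ (n : ℕ) (a b : Fin n → ℝ), W = V n a b})
    (A : NonUnitalStarSubalgebra ℂ (H →L[ℂ] H))
    (hA : A = (NonUnitalStarAlgebra.adjoin ℂ
      ({W | ∃ (n : ℕ) (a : Fin n → ℝ), W = P n a} ∪ 𝒱)).topologicalClosure)
    (I : TwoSidedIdeal A) (hIclosed : IsClosed (I : Set A)) (hIne : I ≠ ⊥) :
    ∃ (m : ℕ) (α : Fin m → ℝ) (hmem : P m α ∈ A), (⟨P m α, hmem⟩ : A) ∈ I := by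
  -- generators lie in BAlg
  have hgens : ({W | ∃ (n : ℕ) (a : Fin n → ℝ), W = P n a} ∪ 𝒱) ⊆ (BAlg : Set (H →L[ℂ] H)) := by
    intro W hW
    rw [BAlg_coe]
    rcases hW with hW | hW
    · obtain ⟨n, a, rfl⟩ := hW
      exact Submodule.subset_span (Or.inr (isMono_P hP n a))
    · obtain ⟨n, a, b, rfl⟩ := h𝒱 hW
      exact Submodule.subset_span (Or.inr (isMono_V hV n a b))
  have hadj : NonUnitalStarAlgebra.adjoin ℂ ({W | ∃ (n : ℕ) (a : Fin n → ℝ), W = P n a} ∪ 𝒱)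
      ≤ BAlg := NonUnitalStarAlgebra.adjoin_le hgens
  -- a nonzero element of the ideal
  have hT0 : ∃ T₀ : A, T₀ ∈ I ∧ T₀ ≠ 0 := by
    by_contra hc
    push_neg at hc
    exact hIne (SetLike.ext fun a =>
      ⟨fun h => (TwoSidedIdeal.mem_bot _).mpr (hc a h),
       fun h => ((TwoSidedIdeal.mem_bot _).mp h) ▸ I.zero_mem⟩)
  obtain ⟨T₀, hT₀I, hT₀ne⟩ := hT0
  set T₀' : H →L[ℂ] H := (T₀ : H →L[ℂ] H) with hT₀'def
  have hT₀'ne : T₀' ≠ 0 := fun h => hT₀ne (Subtype.ext h)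
  -- a basis vector not killed
  have hx : ∃ x : X, T₀' (chi x) ≠ 0 := by
    by_contra hc
    push_neg at hc
    apply hT₀'ne
    apply ContinuousLinearMap.ext
    intro ξ
    have hs : HasSum (fun z : X => lp.single 2 z (ξ z)) ξ :=
      lp.hasSum_single ENNReal.ofNat_ne_top ξ
    have hs2 : HasSum (fun z : X => T₀' (lp.single 2 z (ξ z))) (T₀' ξ) := hs.mapL T₀'
    have hz : ∀ z : X, T₀' (lp.single 2 z (ξ z)) = 0 := by
      intro z
      have hsingle : lp.single 2 z (ξ z) = (ξ z) • chi z := by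
        apply lp.ext; funext w
        rw [lp.coeFn_smul, Pi.smul_apply, chi_apply, lp.single_apply, smul_eq_mul]
        split_ifs with h
        · subst h; simp
        · simp [Pi.single_eq_of_ne h]
      rw [hsingle, map_smul, hc z, smul_zero]
    simp only [hz] at hs2
    rw [ContinuousLinearMap.zero_apply]
    exact hs2.unique hasSum_zero
  obtain ⟨x, hxne⟩ := hx
  -- the positive element of the ideal
  set TA : A := star T₀ * T₀ with hTAdef
  have hTI : TA ∈ I := I.mul_mem_left _ _ hT₀I
  set T' : H →L[ℂ] H := (TA : H →L[ℂ] H) with hT'def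
  have hT'eq : T' = star T₀' * T₀' := rfl
  set r : ℝ := ‖T₀' (chi x)‖ ^ 2 with hrdef
  have hr : 0 < r := by rw [hrdef]; exact pow_pos (norm_pos_iff.mpr hxne) 2
  have hdiagT : T' (chi x) x = (r : ℂ) := by
    have h1 : T' (chi x) x = ⟪T₀' (chi x), T₀' (chi x)⟫_ℂ := by
      rw [hT'eq, ContinuousLinearMap.mul_apply, star_apply_eq]
    rw [h1, inner_self_eq_norm_sq_to_K, hrdef]
    norm_cast
  -- approximate T' from the span
  have hT'mem : T' ∈ closure ((BMod : Submodule ℂ (H →L[ℂ] H)) : Set (H →L[ℂ] H)) := by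
    have h1 : T' ∈ A := TA.2
    rw [hA] at h1
    have h2 : T' ∈ closure ((NonUnitalStarAlgebra.adjoin ℂ
        ({W | ∃ (n : ℕ) (a : Fin n → ℝ), W = P n a} ∪ 𝒱) : NonUnitalStarSubalgebra ℂ _) :
        Set (H →L[ℂ] H)) := h1
    refine closure_mono ?_ h2
    rw [← BAlg_coe]
    exact hadj
  obtain ⟨S, hSmem, hSdist⟩ := Metric.mem_closure_iff.mp hT'mem (r/3) (by positivity)
  rw [dist_eq_norm] at hSdist
  -- compression
  obtain ⟨N, hN⟩ := compress_span hSmem x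
  set α : Fin N → ℝ := fun i => x i with hαdef
  set q : H →L[ℂ] H := P N α with hqdef
  have hq_form : projForm N x q := by
    intro ξ z
    rw [hqdef, hP N α ξ z]
    have hiff : z ∈ Xa α ↔ ∀ i, i < N → z i = x i := by
      constructor
      · intro h i hi; exact h ⟨i, hi⟩
      · intro h i; exact h i i.2
    by_cases h : z ∈ Xa α
    · rw [if_pos h, if_pos (hiff.mp h)]
    · rw [if_neg h, if_neg (fun hc => h (hiff.mpr hc))]
  have hq_idem : q * q = q := by
    apply op_ext; intro ξ z
    rw [ContinuousLinearMap.mul_apply, hq_form (q ξ) z, hq_form ξ z]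
    split_ifs <;> rfl
  have hq_chi : ∀ w : X, q (chi w) = if (∀ i, i < N → w i = x i) then chi w else 0 := by
    intro w
    apply lp.ext; funext z
    rw [hq_form (chi w) z]
    by_cases hw : ∀ i, i < N → w i = x i
    · rw [if_pos hw]
      by_cases hz : ∀ i, i < N → z i = x i
      · rw [if_pos hz]
      · rw [if_neg hz, chi_apply, if_neg (fun hc : z = w => hz (hc ▸ hw))]
    · rw [if_neg hw]
      by_cases hz : ∀ i, i < N → z i = x i
      · rw [if_pos hz, chi_apply, if_neg (fun hc : z = w => hw (hc ▸ hz)), show ((0:H) z) = 0 from rfl]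
      · rw [if_neg hz, show ((0:H) z) = 0 from rfl]
  have hq_star : star q = q := by
    apply op_ext; intro ξ w
    rw [star_apply_eq, hq_chi w, hq_form ξ w]
    by_cases hw : ∀ i, i < N → w i = x i
    · rw [if_pos hw, if_pos hw, ← apply_eq_inner_chi]
    · rw [if_neg hw, if_neg hw, inner_zero_left]
  have hq_ne : q ≠ 0 := by
    intro h
    have h1 : q (chi x) x = 1 := by
      rw [hq_form (chi x) x, if_pos (fun i _ => rfl), chi_apply, if_pos rfl]
    rw [h] at h1
    simp at h1
  have hq_norm : ‖q‖ = 1 := by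
    have h := CStarRing.norm_star_mul_self (x := q)
    rw [hq_star, hq_idem] at h
    have h2 : ‖q‖ ≠ 0 := norm_ne_zero_iff.mpr hq_ne
    have : ‖q‖ * 1 = ‖q‖ * ‖q‖ := by rw [mul_one]; exact h
    exact (mul_left_cancel₀ h2 this).symm
  -- compression identity
  set c : ℂ := S (chi x) x with hcdef
  have hcompr : q * S * q = c • q := hN N le_rfl q hq_form
  have hchi_norm : ‖chi x‖ = 1 := by
    have h := lp.norm_single (p := 2) (E := fun _ : X => ℂ) (by norm_num) x (1:ℂ)
    simpa [chi] using h
  have hcr : ‖c - (r:ℂ)‖ < r/3 := by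
    have h1 : c - (r:ℂ) = ((S - T') (chi x)) x := by
      rw [ContinuousLinearMap.sub_apply, lp.coeFn_sub, Pi.sub_apply, hdiagT, hcdef]
    rw [h1]
    calc ‖((S - T') (chi x)) x‖ ≤ ‖(S - T') (chi x)‖ :=
          lp.norm_apply_le_norm (by norm_num) _ _
      _ ≤ ‖S - T'‖ * ‖chi x‖ := (S - T').le_opNorm _
      _ = ‖T' - S‖ := by rw [hchi_norm, mul_one, norm_sub_rev]
      _ < r/3 := hSdist
  have hcnorm : 2*r/3 ≤ ‖c‖ := by
    have h1 : ‖(r:ℂ)‖ - ‖c‖ ≤ ‖(r:ℂ) - c‖ := norm_sub_norm_le _ _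
    rw [norm_sub_rev] at h1
    have h2 : ‖(r:ℂ)‖ = r := by
      rw [Complex.norm_real, Real.norm_eq_abs, abs_of_pos hr]
    nlinarith [hcr]
  have hcne : c ≠ 0 := by
    intro h
    rw [h, norm_zero] at hcnorm
    nlinarith
  -- membership of q in A
  have hqA : q ∈ A := by
    rw [hA]
    apply NonUnitalStarSubalgebra.le_topologicalClosure
    apply NonUnitalStarAlgebra.subset_adjoin
    exact Or.inl ⟨N, α, rfl⟩
  set qA : A := ⟨q, hqA⟩ with hqAdef
  set RA : A := qA * TA * qA with hRAdef
  have hRAI : RA ∈ I := I.mul_mem_right _ _ (I.mul_mem_left _ _ hTI)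
  have hRA_coe : (RA : H →L[ℂ] H) = q * T' * q := rfl
  have hRdiff : ‖(RA : H →L[ℂ] H) - c • q‖ < r/3 := by
    have h1 : (RA : H →L[ℂ] H) - c • q = q * (T' - S) * q := by
      rw [hRA_coe, ← hcompr, mul_sub, sub_mul]
    rw [h1]
    calc ‖q * (T' - S) * q‖ ≤ ‖q * (T' - S)‖ * ‖q‖ := norm_mul_le _ _
      _ ≤ ‖q‖ * ‖T' - S‖ * ‖q‖ := by
          apply mul_le_mul_of_nonneg_right (norm_mul_le _ _) (norm_nonneg _)
      _ = ‖T' - S‖ := by rw [hq_norm, one_mul, mul_one]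
      _ < r/3 := hSdist
  -- the contraction u
  set u : A := qA - c⁻¹ • RA with hudef
  have hu_coe : (u : H →L[ℂ] H) = q - c⁻¹ • (RA : H →L[ℂ] H) := rfl
  have hu_norm : ‖(u : H →L[ℂ] H)‖ < 1 := by
    have h1 : c • (u : H →L[ℂ] H) = c • q - (RA : H →L[ℂ] H) := by
      rw [hu_coe, smul_sub, smul_smul, mul_inv_cancel₀ hcne, one_smul]
    have h2 : ‖c • (u : H →L[ℂ] H)‖ = ‖c‖ * ‖(u : H →L[ℂ] H)‖ :=
      norm_smul (β := H →L[ℂ] H) c ((u : A) : H →L[ℂ] H)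
    rw [h1, norm_sub_rev] at h2
    nlinarith [hRdiff, norm_nonneg (u : H →L[ℂ] H), hr, hcnorm]
  -- the ideal elements
  have hqR : qA * RA = RA := by
    apply Subtype.ext
    show q * (q * T' * q) = q * T' * q
    rw [← mul_assoc, ← mul_assoc, hq_idem]
  have hRq : RA * qA = RA := by
    apply Subtype.ext
    show (q * T' * q) * q = q * T' * q
    rw [mul_assoc, hq_idem]
  have hR'I : c⁻¹ • RA ∈ I := by
    have h1 : (c⁻¹ • qA) * RA = c⁻¹ • (qA * RA) := smul_mul_assoc c⁻¹ qA RA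
    rw [hqR] at h1
    rw [← h1]
    exact I.mul_mem_left _ _ hRAI
  have hu_q : u * qA = qA - c⁻¹ • RA := by
    have h1 : (qA - c⁻¹ • RA) * qA = qA * qA - (c⁻¹ • RA) * qA := sub_mul qA (c⁻¹ • RA) qA
    have h2 : (c⁻¹ • RA) * qA = c⁻¹ • (RA * qA) := smul_mul_assoc c⁻¹ RA qA
    have h3 : qA * qA = qA := Subtype.ext hq_idem
    rw [hudef, h1, h2, h3, hRq]
  have hqI : qA ∈ I := mem_of_approx I hIclosed qA (c⁻¹ • RA) u hR'I hu_q hu_norm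
  exact ⟨N, α, hqA, hqI⟩

end
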